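/- Let S_n = ∑_{k=0}^n (C(n,k))^{-1}. Then for all n ≥ 2, S_n = 1 + ((n+1)/(2n)) · S_{n-1}. -/

import Mathlib

theorem stmt_4 (S : ℕ → ℝ)
    (hS : ∀ n : ℕ, S n = ∑ k ∈ Finset.range (n + 1), ((n.choose k : ℝ))⁻¹) :
    ∀ n : ℕ, 2 ≤ n → S n = 1 + ((n + 1 : ℝ) / (2 * n)) * S (n - 1) := by
  intro n hn
  obtain ⟨m, rfl⟩ : ∃ m, n = m + 1 := ⟨n - 1, by omega⟩
  simp only [Nat.add_sub_cancel]
  rw [hS, hS]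
  have key : ∀ k ∈ Finset.range (m + 1),
      (((m+1).choose k : ℝ))⁻¹ + (((m+1).choose (k+1) : ℝ))⁻¹
        = ((m + 2 : ℝ) / (m + 1)) * ((m.choose k : ℝ))⁻¹ := by
    intro k hk
    have hk' : k ≤ m := by simpa using Nat.lt_succ_iff.mp (Finset.mem_range.mp hk)
    have h1 : ((m+1).choose k : ℝ) ≠ 0 := by
      exact_mod_cast (Nat.choose_pos (by omega)).ne'
    have h2 : ((m+1).choose (k+1) : ℝ) ≠ 0 := by
      exact_mod_cast (Nat.choose_pos (by omega)).ne'
    have h3 : ((m.choose k) : ℝ) ≠ 0 := by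
      exact_mod_cast (Nat.choose_pos hk').ne'
    have hm1 : (m + 1 : ℝ) ≠ 0 := by positivity
    have hnat : (m+2) * ((m+1).choose k * (m+1).choose (k+1))
        = (m+1) * (((m+1).choose k + (m+1).choose (k+1)) * m.choose k) := by
      have a : (m+1) * m.choose k = (m+1).choose (k+1) * (k+1) := by
        simpa [Nat.succ_eq_add_one] using Nat.add_one_mul_choose_eq m k
      have b : (m+2) * (m+1).choose k = (m+2).choose (k+1) * (k+1) := by
        simpa [Nat.succ_eq_add_one] using Nat.add_one_mul_choose_eq (m+1) k
      have c : (m+2).choose (k+1) = (m+1).choose k + (m+1).choose (k+1) :=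
        Nat.choose_succ_succ _ _
      calc (m+2) * ((m+1).choose k * (m+1).choose (k+1))
          = ((m+2) * (m+1).choose k) * (m+1).choose (k+1) := by ring
        _ = (((m+1).choose k + (m+1).choose (k+1)) * (k+1)) * (m+1).choose (k+1) := by
            rw [b, c]
        _ = ((m+1).choose k + (m+1).choose (k+1)) * ((m+1).choose (k+1) * (k+1)) := by ring
        _ = ((m+1).choose k + (m+1).choose (k+1)) * ((m+1) * m.choose k) := by rw [← a]
        _ = (m+1) * (((m+1).choose k + (m+1).choose (k+1)) * m.choose k) := by ring
    have hR : ((m:ℝ)+2) * (((m+1).choose k : ℝ) * ((m+1).choose (k+1) : ℝ))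
        = ((m:ℝ)+1) * ((((m+1).choose k : ℝ) + ((m+1).choose (k+1) : ℝ)) * (m.choose k : ℝ)) := by
      exact_mod_cast hnat
    field_simp
    nlinarith [hR]
  have hsum := Finset.sum_congr rfl key
  rw [Finset.sum_add_distrib] at hsum
  have e1 : ∑ k ∈ Finset.range (m + 1 + 1), (((m+1).choose k : ℝ))⁻¹
      = (∑ k ∈ Finset.range (m + 1), (((m+1).choose k : ℝ))⁻¹) + 1 := by
    rw [Finset.sum_range_succ]; simp
  have e2 : ∑ k ∈ Finset.range (m + 1 + 1), (((m+1).choose k : ℝ))⁻¹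
      = (∑ k ∈ Finset.range (m + 1), (((m+1).choose (k+1) : ℝ))⁻¹) + 1 := by
    rw [Finset.sum_range_succ']; simp
  rw [← Finset.mul_sum] at hsum
  set T := ∑ k ∈ Finset.range (m + 1 + 1), (((m+1).choose k : ℝ))⁻¹ with hT
  set U := ∑ k ∈ Finset.range (m + 1), ((m.choose k : ℝ))⁻¹ with hU
  have hm1 : (m + 1 : ℝ) ≠ 0 := by positivity
  have h2T : (T - 1) + (T - 1) = ((m + 2 : ℝ) / (m + 1)) * U := by
    linarith [hsum, e1, e2]
  push_cast
  field_simp at h2T ⊢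
  linarith [h2T]
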